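/- Let Γ be a finite graph on d vertices and (H,o) a finite rooted graph. Then the characteristic polynomial of the comb product satisfies φ_{Γ▷H}(x) = φ_{H∖o}(x)^d · φ_Γ(φ_H(x)/φ_{H∖o}(x)), as an identity of rational functions (equivalently, of polynomials after clearing denominators). -/

import Mathlib

open Matrix
open Classical
open Kronecker

private lemma sum_ite_of_const {α : Type*} (s : Finset α) (c : Prop) [Decidable c] (f : α → ℂ) :
    (∑ y ∈ s, if c then f y else 0) = if c then ∑ y ∈ s, f y else 0 := by
  split_ifs <;> simp

/-- The adjacency matrix of a finite simple graph, with complex entries. -/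
noncomputable def adjMat {V : Type*} [Fintype V] (G : SimpleGraph V) : Matrix V V ℂ :=
  Matrix.of fun i j => if G.Adj i j then 1 else 0

/-- The adjacency matrix of the graph obtained by deleting the root `o`. -/
noncomputable def adjMatDelete {V : Type*} [Fintype V] (G : SimpleGraph V) (o : V) :
    Matrix {v : V // v ≠ o} {v : V // v ≠ o} ℂ :=
  (adjMat G).submatrix Subtype.val Subtype.val

/-- The comb product `Γ ▷ (H,o)`: a copy of `H` is glued at its root `o` to every
vertex of `Γ`.  Vertices are pairs `(x₁,x₂)`, and `(x₁,x₂) ~ (y₁,y₂)` iff either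
`x₁ ~ y₁` in `Γ` and `x₂ = y₂ = o`, or `x₁ = y₁` and `x₂ ~ y₂` in `H`. -/
def combProd {V₁ V₂ : Type*} (G₁ : SimpleGraph V₁) (G₂ : SimpleGraph V₂) (o₂ : V₂) :
    SimpleGraph (V₁ × V₂) where
  Adj p q := (G₁.Adj p.1 q.1 ∧ p.2 = o₂ ∧ q.2 = o₂) ∨ (p.1 = q.1 ∧ G₂.Adj p.2 q.2)
  symm := by
    constructor
    rintro p q (⟨h, h2, h3⟩ | ⟨h, h2⟩)
    · exact Or.inl ⟨h.symm, h3, h2⟩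
    · exact Or.inr ⟨h.symm, h2.symm⟩
  loopless := by
    constructor
    rintro p (⟨h, -, -⟩ | ⟨-, h⟩)
    · exact G₁.irrefl h
    · exact G₂.irrefl h

set_option maxHeartbeats 1000000 in
/-- Schwenk's formula for the characteristic polynomial of a comb product:
`φ_{Γ▷H}(x) = φ_{H∖o}(x)^d · φ_Γ(φ_H(x)/φ_{H∖o}(x))` where `d` is the number of
vertices of `Γ`, stated at every point `x` where `φ_{H∖o}(x) ≠ 0` (which is the
identity of rational functions). -/
theorem charpoly_combProd {V₁ V₂ : Type*} [Fintype V₁] [Fintype V₂]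
    [DecidableEq V₁] [DecidableEq V₂]
    (G₁ : SimpleGraph V₁) (G₂ : SimpleGraph V₂) (o₂ : V₂) (x : ℂ)
    (h : (x • (1 : Matrix {v : V₂ // v ≠ o₂} {v : V₂ // v ≠ o₂} ℂ)
      - adjMatDelete G₂ o₂).det ≠ 0) :
    (x • (1 : Matrix (V₁ × V₂) (V₁ × V₂) ℂ) - adjMat (combProd G₁ G₂ o₂)).det
      = (x • (1 : Matrix {v : V₂ // v ≠ o₂} {v : V₂ // v ≠ o₂} ℂ)
            - adjMatDelete G₂ o₂).det ^ (Fintype.card V₁)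
        * (((x • (1 : Matrix V₂ V₂ ℂ) - adjMat G₂).det
              / (x • (1 : Matrix {v : V₂ // v ≠ o₂} {v : V₂ // v ≠ o₂} ℂ)
                  - adjMatDelete G₂ o₂).det)
            • (1 : Matrix V₁ V₁ ℂ) - adjMat G₁).det := by
  classical
  set N : Matrix {v : V₂ // v ≠ o₂} {v : V₂ // v ≠ o₂} ℂ :=
    x • (1 : Matrix {v : V₂ // v ≠ o₂} {v : V₂ // v ≠ o₂} ℂ) - adjMatDelete G₂ o₂ with hNdef
  have hNdet : IsUnit N.det := isUnit_iff_ne_zero.2 h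
  haveI : Invertible N := N.invertibleOfIsUnitDet hNdet
  set β : {v : V₂ // v ≠ o₂} → ℂ := fun u => if G₂.Adj o₂ u.val then 1 else 0 with hβ
  set γ : {v : V₂ // v ≠ o₂} → ℂ := fun v => if G₂.Adj v.val o₂ then 1 else 0 with hγ
  set s : ℂ := ∑ u, ∑ v, β u * N⁻¹ u v * γ v with hs
  -- the equivalence splitting off the root of H
  let e₂ : (Unit ⊕ {v : V₂ // v ≠ o₂}) ≃ V₂ :=
    { toFun := Sum.elim (fun _ => o₂) Subtype.val
      invFun := fun v => if hv : v = o₂ then Sum.inl () else Sum.inr ⟨v, hv⟩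
      left_inv := by
        rintro (u | ⟨v, hv⟩)
        · simp
        · simp [hv]
      right_inv := fun v => by by_cases hv : v = o₂ <;> simp [hv] }
  -- Schur complement computation for φ_H
  have hM : (x • (1 : Matrix V₂ V₂ ℂ) - adjMat G₂).det = N.det * (x - s) := by
    have hsub : (x • (1 : Matrix V₂ V₂ ℂ) - adjMat G₂).submatrix e₂ e₂ =
        Matrix.fromBlocks (Matrix.of fun _ _ => x) (Matrix.of fun _ v => -β v)
          (Matrix.of fun v _ => -γ v) N := by
      ext i j
      rcases i with i | ⟨u, hu⟩ <;> rcases j with j | ⟨v, hv⟩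
      · simp [e₂, adjMat, Matrix.one_apply]
      · simp [e₂, adjMat, Matrix.one_apply, hβ, Ne.symm hv]
      · simp [e₂, adjMat, Matrix.one_apply, hγ, hu]
      · simp [e₂, adjMat, adjMatDelete, hNdef, Matrix.one_apply, Subtype.ext_iff]
    rw [← Matrix.det_submatrix_equiv_self e₂, hsub, Matrix.det_fromBlocks₂₂,
      Matrix.invOf_eq_nonsing_inv]
    congr 1
    rw [Matrix.det_unique]
    have key : ∀ v, (∑ u, -β u * N⁻¹ u v) * -γ v = ∑ u, β u * N⁻¹ u v * γ v := by
      intro v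
      rw [Finset.sum_mul]
      exact Finset.sum_congr rfl fun u _ => by ring
    simp only [Matrix.sub_apply, Matrix.mul_apply, Matrix.of_apply]
    rw [show (∑ j, (∑ j_1, -β j_1 * N⁻¹ j_1 j) * -γ j) = s by
      rw [hs, Finset.sum_comm]
      exact Finset.sum_congr rfl fun v _ => key v]
  -- the equivalence splitting the comb product vertices
  let e₁ : (V₁ ⊕ V₁ × {v : V₂ // v ≠ o₂}) ≃ V₁ × V₂ :=
    { toFun := Sum.elim (fun a => (a, o₂)) fun p => (p.1, p.2.val)
      invFun := fun p => if hp : p.2 = o₂ then Sum.inl p.1 else Sum.inr (p.1, ⟨p.2, hp⟩)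
      left_inv := by
        rintro (a | ⟨a, v, hv⟩)
        · simp
        · simp [hv]
      right_inv := fun p => by by_cases hp : p.2 = o₂ <;> simp [hp, Prod.ext_iff] }
  set BB : Matrix V₁ (V₁ × {v : V₂ // v ≠ o₂}) ℂ :=
    Matrix.of fun a p => if a = p.1 then -β p.2 else 0 with hBB
  set CC : Matrix (V₁ × {v : V₂ // v ≠ o₂}) V₁ ℂ :=
    Matrix.of fun p b => if p.1 = b then -γ p.2 else 0 with hCC
  set DD : Matrix (V₁ × {v : V₂ // v ≠ o₂}) (V₁ × {v : V₂ // v ≠ o₂}) ℂ :=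
    (1 : Matrix V₁ V₁ ℂ) ⊗ₖ N with hDD
  have hBsub : (x • (1 : Matrix (V₁ × V₂) (V₁ × V₂) ℂ)
      - adjMat (combProd G₁ G₂ o₂)).submatrix e₁ e₁ =
      Matrix.fromBlocks (x • (1 : Matrix V₁ V₁ ℂ) - adjMat G₁) BB CC DD := by
    ext i j
    rcases i with a | ⟨a, u⟩ <;> rcases j with b | ⟨b, v⟩
    · simp only [Matrix.submatrix_apply, e₁, Equiv.coe_fn_mk, Sum.elim_inl,
        Matrix.sub_apply, Matrix.smul_apply, Matrix.one_apply,
        Matrix.fromBlocks_apply₁₁, adjMat, Matrix.of_apply, combProd, smul_eq_mul]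
      have hpair : ((a, o₂) : V₁ × V₂) = (b, o₂) ↔ a = b := by simp [Prod.ext_iff]
      have hiff : ((G₁.Adj a b ∧ True ∧ True) ∨ (a = b ∧ G₂.Adj o₂ o₂)) ↔ G₁.Adj a b :=
        ⟨fun hc => (hc.resolve_right fun hc' => G₂.irrefl hc'.2).1,
         fun hc => Or.inl ⟨hc, trivial, trivial⟩⟩
      rw [if_congr hpair rfl rfl, if_congr hiff rfl rfl]
    · simp only [Matrix.submatrix_apply, e₁, Equiv.coe_fn_mk, Sum.elim_inl, Sum.elim_inr,
        Matrix.sub_apply, Matrix.smul_apply, Matrix.one_apply,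
        Matrix.fromBlocks_apply₁₂, hBB, hβ, adjMat, Matrix.of_apply, combProd, smul_eq_mul]
      have h1 : ((a, o₂) : V₁ × V₂) ≠ (b, ↑v) := fun hpq => v.2 (congrArg Prod.snd hpq).symm
      have hiff : ((G₁.Adj a b ∧ True ∧ ↑v = o₂) ∨ (a = b ∧ G₂.Adj o₂ ↑v))
          ↔ (a = b ∧ G₂.Adj o₂ ↑v) :=
        ⟨fun hc => hc.resolve_left fun hc' => v.2 hc'.2.2, Or.inr⟩
      rw [if_neg h1, mul_zero, zero_sub, if_congr hiff rfl rfl, ite_and,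
        apply_ite Neg.neg, neg_zero]
    · simp only [Matrix.submatrix_apply, e₁, Equiv.coe_fn_mk, Sum.elim_inl, Sum.elim_inr,
        Matrix.sub_apply, Matrix.smul_apply, Matrix.one_apply,
        Matrix.fromBlocks_apply₂₁, hCC, hγ, adjMat, Matrix.of_apply, combProd, smul_eq_mul]
      have h1 : ((a, ↑u) : V₁ × V₂) ≠ (b, o₂) := fun hpq => u.2 (congrArg Prod.snd hpq)
      have hiff : ((G₁.Adj a b ∧ ↑u = o₂ ∧ True) ∨ (a = b ∧ G₂.Adj ↑u o₂))
          ↔ (a = b ∧ G₂.Adj ↑u o₂) :=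
        ⟨fun hc => hc.resolve_left fun hc' => u.2 hc'.2.1, Or.inr⟩
      rw [if_neg h1, mul_zero, zero_sub, if_congr hiff rfl rfl, ite_and,
        apply_ite Neg.neg, neg_zero]
    · simp only [Matrix.submatrix_apply, e₁, Equiv.coe_fn_mk, Sum.elim_inr,
        Matrix.sub_apply, Matrix.smul_apply, Matrix.one_apply,
        Matrix.fromBlocks_apply₂₂, hDD, Matrix.kroneckerMap_apply, hNdef,
        adjMat, adjMatDelete, Matrix.of_apply, combProd, smul_eq_mul]
      have hpair : ((a, ↑u) : V₁ × V₂) = (b, ↑v) ↔ a = b ∧ u = v := by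
        simp [Prod.ext_iff, Subtype.ext_iff]
      have hiff : ((G₁.Adj a b ∧ ↑u = o₂ ∧ ↑v = o₂) ∨ (a = b ∧ G₂.Adj ↑u ↑v))
          ↔ (a = b ∧ G₂.Adj ↑u ↑v) :=
        ⟨fun hc => hc.resolve_left fun hc' => u.2 hc'.2.1, Or.inr⟩
      simp only [hiff, Prod.mk.injEq, Subtype.coe_inj]
      rw [ite_and, ite_and]
      by_cases hab : a = b <;> simp [hab]
  have hDDdet : DD.det = N.det ^ Fintype.card V₁ := by
    rw [hDD, Matrix.det_kronecker]; simp
  haveI : Invertible DD := DD.invertibleOfIsUnitDet (by rw [hDDdet]; exact hNdet.pow _)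
  have hDDinv : ⅟ DD = (1 : Matrix V₁ V₁ ℂ) ⊗ₖ N⁻¹ := by
    rw [Matrix.invOf_eq_nonsing_inv]
    apply Matrix.inv_eq_right_inv
    rw [hDD, ← Matrix.mul_kronecker_mul, Matrix.one_mul, Matrix.mul_nonsing_inv _ hNdet,
      Matrix.one_kronecker_one]
  have hSchur : (x • (1 : Matrix V₁ V₁ ℂ) - adjMat G₁) - BB * ⅟ DD * CC
      = (x - s) • (1 : Matrix V₁ V₁ ℂ) - adjMat G₁ := by
    rw [hDDinv]
    have key : ∀ a b, (BB * ((1 : Matrix V₁ V₁ ℂ) ⊗ₖ N⁻¹) * CC) a b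
        = if a = b then s else 0 := by
      intro a b
      simp only [Matrix.mul_apply, hBB, hCC, Matrix.of_apply, Matrix.kroneckerMap_apply,
        Matrix.one_apply, Fintype.sum_prod_type, ite_mul, zero_mul, mul_ite, mul_zero,
        mul_one, one_mul, Finset.sum_ite_eq, Finset.sum_ite_eq', Finset.mem_univ, if_true]
      simp only [sum_ite_of_const, ite_mul, zero_mul, Finset.sum_ite_eq',
        Finset.sum_ite_eq, Finset.mem_univ, if_true]
      by_cases hab : a = b
      · subst hab
        simp only [if_true]
        rw [hs, Finset.sum_comm]
        refine Finset.sum_congr rfl fun v _ => ?_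
        rw [Finset.sum_mul]
        exact Finset.sum_congr rfl fun u _ => by ring
      · simp [hab]
    ext a b
    simp [Matrix.sub_apply, Matrix.smul_apply, key a b, Matrix.one_apply, smul_eq_mul]
    split_ifs <;> ring
  rw [← Matrix.det_submatrix_equiv_self e₁, hBsub, Matrix.det_fromBlocks₂₂, hSchur, hDDdet,
    hM, mul_div_cancel_left₀ _ h]
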